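/- Let A and Ã be symmetric n×n real matrices, both of rank at least k, with eigenvalues λ₁ ≥ … ≥ λₙ and λ̃₁ ≥ … ≥ λ̃ₙ respectively. If λ_k > λ̃_{k+1}, then d₂(V_{A,k}, V_{Ã,k}) ≤ ‖A − Ã‖₂ / (λ_k − λ̃_{k+1}). -/

import Mathlib

open Matrix MeasureTheory

noncomputable section

/-- Euclidean norm of a vector in `ℝ^n`. -/
def vnorm {n : ℕ} (v : Fin n → ℝ) : ℝ := Real.sqrt (∑ i, v i ^ 2)

/-- Spectral norm of a matrix (operator norm as a map between Euclidean spaces). -/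
def spec {m n : ℕ} (M : Matrix (Fin m) (Fin n) ℝ) : ℝ :=
  ‖LinearMap.toContinuousLinearMap (Matrix.toEuclideanLin M)‖

/-- The four Moore-Penrose conditions. -/
def IsMP {m n : ℕ} (X : Matrix (Fin m) (Fin n) ℝ) (Y : Matrix (Fin n) (Fin m) ℝ) : Prop :=
  X * Y * X = X ∧ Y * X * Y = Y ∧ (X * Y)ᵀ = X * Y ∧ (Y * X)ᵀ = Y * X

/-- The Moore-Penrose pseudoinverse (it always exists and is unique, so this choice-based
definition picks out exactly the Moore-Penrose pseudoinverse). -/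
def pinv {m n : ℕ} (X : Matrix (Fin m) (Fin n) ℝ) : Matrix (Fin n) (Fin m) ℝ := by
  classical exact if h : ∃ Y, IsMP X Y then h.choose else 0

/-- Orthogonal projection onto the column space of a matrix: `P_X = X X⁺`. -/
def projCol {m n : ℕ} (X : Matrix (Fin m) (Fin n) ℝ) : Matrix (Fin m) (Fin m) ℝ := X * pinv X

/-- Distance between column spaces: `d₂(U, W) = ‖P_U - P_W‖₂`. -/
def d2 {m p q : ℕ} (U : Matrix (Fin m) (Fin p) ℝ) (W : Matrix (Fin m) (Fin q) ℝ) : ℝ :=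
  spec (projCol U - projCol W)

/-- `(U, s, V)` is a thin SVD of `X`: orthonormal columns, nonincreasing nonnegative
singular values, and `X = U (diag s) Vᵀ`. -/
def IsThinSVD {m n p : ℕ} (X : Matrix (Fin m) (Fin n) ℝ) (U : Matrix (Fin m) (Fin p) ℝ)
    (s : Fin p → ℝ) (V : Matrix (Fin n) (Fin p) ℝ) : Prop :=
  Uᵀ * U = 1 ∧ Vᵀ * V = 1 ∧ Antitone s ∧ (∀ i, 0 ≤ s i) ∧ X = U * Matrix.diagonal s * Vᵀ

/-- The matrix of the first `k` columns. -/
def firstCols {m p : ℕ} (U : Matrix (Fin m) (Fin p) ℝ) (k : ℕ) (h : k ≤ p) :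
    Matrix (Fin m) (Fin k) ℝ := U.submatrix id (Fin.castLE h)

/-- The matrix of the remaining columns (columns `k+1, …, p` in 1-based indexing). -/
def tailCols {m p : ℕ} (U : Matrix (Fin m) (Fin p) ℝ) (k : ℕ) (h : k ≤ p) :
    Matrix (Fin m) (Fin (p - k)) ℝ :=
  U.submatrix id (fun j => ⟨k + j.1, by have := j.2; omega⟩)

/-- `sv s i` is the `i`-th singular value (1-indexed), `0` past the end. -/
def sv {p : ℕ} (s : Fin p → ℝ) (i : ℕ) : ℝ := by
  classical exact if h : i - 1 < p then s ⟨i - 1, h⟩ else 0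

end


section DKproofs
open Matrix
open scoped Matrix.Norms.L2Operator

namespace DK
variable {m n p q : ℕ}

lemma spec_eq (M : Matrix (Fin m) (Fin n) ℝ) : spec M = ‖M‖ := by
  rw [Matrix.l2_opNorm_def]; rfl

lemma conjT (M : Matrix (Fin m) (Fin n) ℝ) : Mᴴ = Mᵀ := by
  ext i j; simp [Matrix.conjTranspose_apply]

lemma spec_nonneg (M : Matrix (Fin m) (Fin n) ℝ) : 0 ≤ spec M := by
  rw [spec_eq]; exact norm_nonneg _

lemma spec_transpose (M : Matrix (Fin m) (Fin n) ℝ) : spec Mᵀ = spec M := by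
  rw [spec_eq, spec_eq, ← conjT, Matrix.l2_opNorm_conjTranspose]

lemma spec_mul_le (M : Matrix (Fin m) (Fin n) ℝ) (N : Matrix (Fin n) (Fin p) ℝ) :
    spec (M * N) ≤ spec M * spec N := by
  simp only [spec_eq]; exact Matrix.l2_opNorm_mul M N

lemma spec_transpose_mul_self (M : Matrix (Fin m) (Fin n) ℝ) :
    spec (Mᵀ * M) = spec M ^ 2 := by
  simp only [spec_eq, ← conjT, sq]; exact Matrix.l2_opNorm_conjTranspose_mul_self M

lemma enorm_sq (y : Fin m → ℝ) :
    ‖(WithLp.equiv 2 (Fin m → ℝ)).symm y‖ ^ 2 = y ⬝ᵥ y := by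
  rw [EuclideanSpace.norm_eq, Real.sq_sqrt (by positivity)]
  simp [dotProduct, sq]

lemma dot_self_nonneg (y : Fin m → ℝ) : 0 ≤ y ⬝ᵥ y :=
  Finset.sum_nonneg fun i _ => mul_self_nonneg _

lemma mulVec_dot_le (M : Matrix (Fin m) (Fin n) ℝ) (x : Fin n → ℝ) :
    (M *ᵥ x) ⬝ᵥ (M *ᵥ x) ≤ spec M ^ 2 * (x ⬝ᵥ x) := by
  have h := Matrix.l2_opNorm_mulVec M ((WithLp.equiv 2 (Fin n → ℝ)).symm x)
  have h2 : ‖(EuclideanSpace.equiv (Fin m) ℝ).symm (M *ᵥ x)‖ ^ 2 ≤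
      (‖M‖ * ‖(WithLp.equiv 2 (Fin n → ℝ)).symm x‖) ^ 2 := by
    apply pow_le_pow_left₀ (norm_nonneg _) _ 2
    simpa using h
  calc (M *ᵥ x) ⬝ᵥ (M *ᵥ x) = ‖(WithLp.equiv 2 (Fin m → ℝ)).symm (M *ᵥ x)‖ ^ 2 :=
        (enorm_sq _).symm
    _ ≤ (‖M‖ * ‖(WithLp.equiv 2 (Fin n → ℝ)).symm x‖) ^ 2 := h2
    _ = spec M ^ 2 * (x ⬝ᵥ x) := by rw [mul_pow, enorm_sq, spec_eq]

lemma spec_le_bound {M : Matrix (Fin m) (Fin n) ℝ} {c : ℝ} (hc : 0 ≤ c)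
    (h : ∀ x : Fin n → ℝ, (M *ᵥ x) ⬝ᵥ (M *ᵥ x) ≤ c ^ 2 * (x ⬝ᵥ x)) : spec M ≤ c := by
  refine ContinuousLinearMap.opNorm_le_bound _ hc fun X => ?_
  have hX : X = (WithLp.equiv 2 (Fin n → ℝ)).symm (WithLp.equiv 2 (Fin n → ℝ) X) := rfl
  set x := WithLp.equiv 2 (Fin n → ℝ) X with hx
  have h1 : (LinearMap.toContinuousLinearMap (Matrix.toEuclideanLin M)) X =
      (WithLp.equiv 2 (Fin m → ℝ)).symm (M *ᵥ x) := rfl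
  rw [h1]
  have h2 : ‖(WithLp.equiv 2 (Fin m → ℝ)).symm (M *ᵥ x)‖ ^ 2 ≤ (c * ‖X‖) ^ 2 := by
    rw [enorm_sq, mul_pow]
    calc (M *ᵥ x) ⬝ᵥ (M *ᵥ x) ≤ c ^ 2 * (x ⬝ᵥ x) := h x
      _ = c ^ 2 * ‖X‖ ^ 2 := by rw [hX, enorm_sq]
  exact (pow_le_pow_iff_left₀ (norm_nonneg _) (by positivity) two_ne_zero).mp h2

lemma dot_mulVec_mulVec (M : Matrix (Fin m) (Fin n) ℝ) (N : Matrix (Fin m) (Fin p) ℝ)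
    (x : Fin n → ℝ) (y : Fin p → ℝ) :
    (M *ᵥ x) ⬝ᵥ (N *ᵥ y) = x ⬝ᵥ ((Mᵀ * N) *ᵥ y) := by
  rw [Matrix.dotProduct_mulVec (M *ᵥ x) N y, Matrix.vecMul_mulVec,
    Matrix.dotProduct_mulVec x]

lemma dot_self_eq_zero {y : Fin m → ℝ} (h : y ⬝ᵥ y = 0) : y = 0 := by
  funext i
  have := Finset.sum_eq_zero_iff_of_nonneg (fun j _ => mul_self_nonneg (y j)) |>.mp h i
    (Finset.mem_univ i)
  have := mul_self_eq_zero.mp this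
  simpa using this

lemma spec_one_le : spec (1 : Matrix (Fin m) (Fin m) ℝ) ≤ 1 := by
  refine spec_le_bound zero_le_one fun x => ?_
  simp [Matrix.one_mulVec]

lemma spec_le_one {U : Matrix (Fin m) (Fin n) ℝ} (hU : Uᵀ * U = 1) : spec U ≤ 1 := by
  have h : spec U ^ 2 ≤ 1 := by rw [← spec_transpose_mul_self, hU]; exact spec_one_le
  nlinarith [spec_nonneg U]

lemma spec_orthL {U : Matrix (Fin m) (Fin n) ℝ} (hU : Uᵀ * U = 1)
    (X : Matrix (Fin n) (Fin p) ℝ) : spec (U * X) = spec X := by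
  apply le_antisymm
  · calc spec (U * X) ≤ spec U * spec X := spec_mul_le _ _
      _ ≤ 1 * spec X := by
          exact mul_le_mul_of_nonneg_right (spec_le_one hU) (spec_nonneg X)
      _ = spec X := one_mul _
  · have h1 : X = Uᵀ * (U * X) := by rw [← Matrix.mul_assoc, hU, Matrix.one_mul]
    calc spec X = spec (Uᵀ * (U * X)) := by rw [← h1]
      _ ≤ spec Uᵀ * spec (U * X) := spec_mul_le _ _
      _ ≤ 1 * spec (U * X) := by
          refine mul_le_mul_of_nonneg_right ?_ (spec_nonneg _)
          rw [spec_transpose]; exact spec_le_one hU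
      _ = spec (U * X) := one_mul _

lemma spec_orthR {W : Matrix (Fin m) (Fin n) ℝ} (hW : Wᵀ * W = 1)
    (X : Matrix (Fin p) (Fin n) ℝ) : spec (X * Wᵀ) = spec X := by
  rw [← spec_transpose (X * Wᵀ), Matrix.transpose_mul, Matrix.transpose_transpose,
    spec_orthL hW, spec_transpose]

lemma diag_mulVec (d : Fin m → ℝ) (x : Fin m → ℝ) :
    Matrix.diagonal d *ᵥ x = fun i => d i * x i := by
  funext i; rw [Matrix.mulVec_diagonal]

lemma dot_diag_le (d : Fin m → ℝ) (x : Fin m → ℝ) {b : ℝ} (hb : ∀ i, d i ≤ b) :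
    x ⬝ᵥ (Matrix.diagonal d *ᵥ x) ≤ b * (x ⬝ᵥ x) := by
  rw [diag_mulVec, dotProduct, dotProduct, Finset.mul_sum]
  refine Finset.sum_le_sum fun i _ => ?_
  have : x i * (d i * x i) = d i * (x i * x i) := by ring
  rw [this]
  exact mul_le_mul_of_nonneg_right (hb i) (mul_self_nonneg _)

lemma dot_diag_ge (d : Fin m → ℝ) (x : Fin m → ℝ) {a : ℝ} (ha : ∀ i, a ≤ d i) :
    a * (x ⬝ᵥ x) ≤ x ⬝ᵥ (Matrix.diagonal d *ᵥ x) := by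
  have := dot_diag_le (fun i => -d i) x (b := -a) (fun i => neg_le_neg (ha i))
  have h2 : Matrix.diagonal (fun i => -d i) = -Matrix.diagonal d := by
    ext i j; simp [Matrix.diagonal]; split <;> simp
  rw [h2, Matrix.neg_mulVec, dotProduct_neg, neg_mul] at this
  linarith

lemma spec_diag_le {d : Fin m → ℝ} {c : ℝ} (hc : 0 ≤ c) (h : ∀ i, |d i| ≤ c) :
    spec (Matrix.diagonal d) ≤ c := by
  refine spec_le_bound hc fun x => ?_
  rw [diag_mulVec, dotProduct, dotProduct, Finset.mul_sum]
  refine Finset.sum_le_sum fun i _ => ?_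
  have h1 : d i * x i * (d i * x i) = (d i)^2 * (x i * x i) := by ring
  rw [h1]
  refine mul_le_mul_of_nonneg_right ?_ (mul_self_nonneg _)
  calc (d i)^2 = |d i|^2 := (sq_abs _).symm
    _ ≤ c ^ 2 := by exact pow_le_pow_left₀ (abs_nonneg _) (h i) 2

-- Cauchy-Schwarz for dot products
lemma dot_le_sqrt (v w : Fin m → ℝ) :
    v ⬝ᵥ w ≤ Real.sqrt (v ⬝ᵥ v) * Real.sqrt (w ⬝ᵥ w) := by
  have h := real_inner_le_norm ((WithLp.equiv 2 (Fin m → ℝ)).symm v)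
    ((WithLp.equiv 2 (Fin m → ℝ)).symm w)
  have hi : (inner ℝ ((WithLp.equiv 2 (Fin m → ℝ)).symm v)
      ((WithLp.equiv 2 (Fin m → ℝ)).symm w) : ℝ) = v ⬝ᵥ w := by
    simp [PiLp.inner_apply, dotProduct, mul_comm]
  have hv : ‖(WithLp.equiv 2 (Fin m → ℝ)).symm v‖ = Real.sqrt (v ⬝ᵥ v) := by
    rw [← enorm_sq v, Real.sqrt_sq (norm_nonneg _)]
  have hw : ‖(WithLp.equiv 2 (Fin m → ℝ)).symm w‖ = Real.sqrt (w ⬝ᵥ w) := by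
    rw [← enorm_sq w, Real.sqrt_sq (norm_nonneg _)]
  rw [hi, hv, hw] at h
  exact h

lemma isHermitian_of_sym {H : Matrix (Fin m) (Fin m) ℝ} (h : Hᵀ = H) : H.IsHermitian := by
  unfold Matrix.IsHermitian
  rw [conjT]; exact h

/-- Packaged real spectral theorem. -/
lemma sym_decomp {H : Matrix (Fin m) (Fin m) ℝ} (h : Hᵀ = H) :
    ∃ (U : Matrix (Fin m) (Fin m) ℝ) (μ : Fin m → ℝ),
      Uᵀ * U = 1 ∧ U * Uᵀ = 1 ∧ H = U * Matrix.diagonal μ * Uᵀ ∧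
      (∀ i, H *ᵥ (fun l => U l i) = μ i • (fun l => U l i)) ∧
      (∀ i, (fun l => U l i) ⬝ᵥ (fun l => U l i) = 1) := by
  have hH := isHermitian_of_sym h
  refine ⟨(hH.eigenvectorUnitary : Matrix (Fin m) (Fin m) ℝ), hH.eigenvalues, ?_, ?_, ?_, ?_, ?_⟩
  · have := (Unitary.mem_iff.mp hH.eigenvectorUnitary.2).1
    rw [Matrix.star_eq_conjTranspose, conjT] at this
    exact this
  · have := (Unitary.mem_iff.mp hH.eigenvectorUnitary.2).2
    rw [Matrix.star_eq_conjTranspose, conjT] at this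
    exact this
  · have := hH.spectral_theorem
    rw [Unitary.conjStarAlgAut_apply, Matrix.star_eq_conjTranspose, conjT] at this
    have hd : Matrix.diagonal (RCLike.ofReal ∘ hH.eigenvalues) = Matrix.diagonal hH.eigenvalues := by
      congr 1
    rw [hd] at this
    exact this
  · intro i
    have h1 := hH.mulVec_eigenvectorBasis i
    have h2 : (fun l => (hH.eigenvectorUnitary : Matrix (Fin m) (Fin m) ℝ) l i) =
        ⇑(hH.eigenvectorBasis i) := by
      funext l; exact hH.eigenvectorUnitary_apply l i
    rw [h2]; exact h1
  · intro i
    have h2 : (fun l => (hH.eigenvectorUnitary : Matrix (Fin m) (Fin m) ℝ) l i) =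
        ⇑(hH.eigenvectorBasis i) := by
      funext l; exact hH.eigenvectorUnitary_apply l i
    rw [h2]
    have h3 := hH.eigenvectorBasis.orthonormal.1 i
    have h4 : ‖(WithLp.equiv 2 (Fin m → ℝ)).symm ⇑(hH.eigenvectorBasis i)‖ ^ 2
        = ⇑(hH.eigenvectorBasis i) ⬝ᵥ ⇑(hH.eigenvectorBasis i) := enorm_sq _
    rw [← h4]
    have h5 : (WithLp.equiv 2 (Fin m → ℝ)).symm ⇑(hH.eigenvectorBasis i)
        = hH.eigenvectorBasis i := rfl
    rw [h5, h3]; norm_num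

lemma mulVec_decomp (U : Matrix (Fin m) (Fin m) ℝ) (d : Fin m → ℝ) (x : Fin m → ℝ)
    (hU2 : U * Uᵀ = 1) :
    x ⬝ᵥ ((U * Matrix.diagonal d * Uᵀ) *ᵥ x)
      = (Uᵀ *ᵥ x) ⬝ᵥ (Matrix.diagonal d *ᵥ (Uᵀ *ᵥ x)) := by
  have h1 : (U * Matrix.diagonal d * Uᵀ) *ᵥ x
      = U *ᵥ (Matrix.diagonal d *ᵥ (Uᵀ *ᵥ x)) := by
    rw [Matrix.mulVec_mulVec, Matrix.mulVec_mulVec]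
  rw [h1, Matrix.dotProduct_mulVec, ← Matrix.mulVec_transpose]

lemma dot_Ut (U : Matrix (Fin m) (Fin m) ℝ) (x : Fin m → ℝ) (hU2 : U * Uᵀ = 1) :
    (Uᵀ *ᵥ x) ⬝ᵥ (Uᵀ *ᵥ x) = x ⬝ᵥ x := by
  rw [dot_mulVec_mulVec, Matrix.transpose_transpose, hU2, Matrix.one_mulVec]

/-- Rayleigh upper bound -/
lemma rayleigh_le {H : Matrix (Fin m) (Fin m) ℝ} {U : Matrix (Fin m) (Fin m) ℝ}
    {μ : Fin m → ℝ} (hU2 : U * Uᵀ = 1) (hdec : H = U * Matrix.diagonal μ * Uᵀ)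
    {b : ℝ} (hb : ∀ i, μ i ≤ b) (x : Fin m → ℝ) :
    x ⬝ᵥ (H *ᵥ x) ≤ b * (x ⬝ᵥ x) := by
  rw [hdec, mulVec_decomp U μ x hU2]
  calc (Uᵀ *ᵥ x) ⬝ᵥ (Matrix.diagonal μ *ᵥ (Uᵀ *ᵥ x)) ≤ b * ((Uᵀ *ᵥ x) ⬝ᵥ (Uᵀ *ᵥ x)) :=
        dot_diag_le μ _ hb
    _ = b * (x ⬝ᵥ x) := by rw [dot_Ut U x hU2]

lemma rayleigh_ge {H : Matrix (Fin m) (Fin m) ℝ} {U : Matrix (Fin m) (Fin m) ℝ}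
    {μ : Fin m → ℝ} (hU2 : U * Uᵀ = 1) (hdec : H = U * Matrix.diagonal μ * Uᵀ)
    {a : ℝ} (ha : ∀ i, a ≤ μ i) (x : Fin m → ℝ) :
    a * (x ⬝ᵥ x) ≤ x ⬝ᵥ (H *ᵥ x) := by
  rw [hdec, mulVec_decomp U μ x hU2]
  calc a * (x ⬝ᵥ x) = a * ((Uᵀ *ᵥ x) ⬝ᵥ (Uᵀ *ᵥ x)) := by rw [dot_Ut U x hU2]
    _ ≤ _ := dot_diag_ge μ _ ha

lemma spec_conj (U : Matrix (Fin m) (Fin m) ℝ) (d : Fin m → ℝ)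
    (hU : Uᵀ * U = 1) (hU2 : U * Uᵀ = 1) :
    spec (U * Matrix.diagonal d * Uᵀ) = spec (Matrix.diagonal d) := by
  rw [Matrix.mul_assoc, spec_orthL hU, spec_orthR hU]

/-- spec of a vector: dot product bound via Cauchy-Schwarz + operator bound. -/
lemma dot_mulVec_le_spec (S : Matrix (Fin m) (Fin n) ℝ) (u : Fin n → ℝ) (v : Fin m → ℝ)
    (hu : u ⬝ᵥ u = 1) (hv : v ⬝ᵥ v = 1) : v ⬝ᵥ (S *ᵥ u) ≤ spec S := by
  calc v ⬝ᵥ (S *ᵥ u) ≤ Real.sqrt (v ⬝ᵥ v) * Real.sqrt ((S *ᵥ u) ⬝ᵥ (S *ᵥ u)) :=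
        dot_le_sqrt _ _
    _ ≤ 1 * Real.sqrt (spec S ^ 2 * 1) := by
        rw [hv]
        gcongr
        · exact Real.sqrt_one.le
        · calc (S *ᵥ u) ⬝ᵥ (S *ᵥ u) ≤ spec S ^ 2 * (u ⬝ᵥ u) := mulVec_dot_le S u
            _ = spec S ^ 2 * 1 := by rw [hu]
    _ = spec S := by
        rw [mul_one, one_mul, Real.sqrt_sq (spec_nonneg S)]

/-- Existence of a top singular pair. -/
lemma exists_sing_pair (X : Matrix (Fin p) (Fin q) ℝ) (hX : 0 < spec X) :
    ∃ (u : Fin q → ℝ) (v : Fin p → ℝ), u ⬝ᵥ u = 1 ∧ v ⬝ᵥ v = 1 ∧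
      X *ᵥ u = spec X • v ∧ Xᵀ *ᵥ v = spec X • u := by
  have hsym : (Xᵀ * X)ᵀ = Xᵀ * X := by
    rw [Matrix.transpose_mul, Matrix.transpose_transpose]
  obtain ⟨U, μ, hU, hU2, hdec, heig, hnorm⟩ := sym_decomp hsym
  -- q is nonempty
  have hq : Nonempty (Fin q) := by
    by_contra hempty
    have : X = 0 := by
      ext i j; exact absurd ⟨j⟩ hempty
    rw [this] at hX
    have : spec (0 : Matrix (Fin p) (Fin q) ℝ) = 0 := by
      have h0 := spec_le_bound (M := (0 : Matrix (Fin p) (Fin q) ℝ)) le_rfl ?_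
      · exact le_antisymm h0 (spec_nonneg _)
      · intro x; simp [Matrix.zero_mulVec, dotProduct]
    linarith
  obtain ⟨i0, -, hi0⟩ := Finset.exists_max_image (Finset.univ : Finset (Fin q)) μ
    ⟨hq.some, Finset.mem_univ _⟩
  set u : Fin q → ℝ := fun l => U l i0 with hudef
  have huu : u ⬝ᵥ u = 1 := hnorm i0
  have heq : (Xᵀ * X) *ᵥ u = μ i0 • u := heig i0
  have hμnonneg : ∀ i, 0 ≤ μ i := by
    intro i
    have h1 : (fun l => U l i) ⬝ᵥ ((Xᵀ * X) *ᵥ (fun l => U l i)) = μ i := by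
      rw [heig i, dotProduct_smul, hnorm i, smul_eq_mul, mul_one]
    have h2 : (X *ᵥ (fun l => U l i)) ⬝ᵥ (X *ᵥ (fun l => U l i))
        = (fun l => U l i) ⬝ᵥ ((Xᵀ * X) *ᵥ (fun l => U l i)) := dot_mulVec_mulVec _ _ _ _
    rw [← h1, ← h2]
    exact dot_self_nonneg _
  have hle : spec X ^ 2 ≤ μ i0 := by
    have e1 : spec (Xᵀ * X) = spec X ^ 2 := spec_transpose_mul_self X
    have e2 : spec (Xᵀ * X) = spec (Matrix.diagonal μ) := by
      rw [hdec]; exact spec_conj U μ hU hU2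
    have e3 : spec (Matrix.diagonal μ) ≤ μ i0 := by
      refine spec_diag_le (hμnonneg i0) fun i => ?_
      rw [abs_of_nonneg (hμnonneg i)]
      exact hi0 i (Finset.mem_univ i)
    linarith
  have hge : μ i0 ≤ spec X ^ 2 := by
    have h2 : (X *ᵥ u) ⬝ᵥ (X *ᵥ u) = u ⬝ᵥ ((Xᵀ * X) *ᵥ u) := dot_mulVec_mulVec _ _ _ _
    have h1 : u ⬝ᵥ ((Xᵀ * X) *ᵥ u) = μ i0 := by
      rw [heq, dotProduct_smul, huu, smul_eq_mul, mul_one]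
    have h3 := mulVec_dot_le X u
    rw [h2, h1, huu, mul_one] at h3
    exact h3
  have hmu : μ i0 = spec X ^ 2 := le_antisymm hge hle
  set σ := spec X with hσ
  have hσne : σ ≠ 0 := ne_of_gt hX
  set w := X *ᵥ u with hwdef
  have hww : w ⬝ᵥ w = σ ^ 2 := by
    rw [hwdef, dot_mulVec_mulVec, heq, dotProduct_smul, huu, smul_eq_mul, mul_one, hmu]
  refine ⟨u, σ⁻¹ • w, huu, ?_, ?_, ?_⟩
  · rw [smul_dotProduct, dotProduct_smul, hww, smul_eq_mul, smul_eq_mul]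
    field_simp
  · rw [← hwdef, smul_smul, mul_inv_cancel₀ hσne, one_smul]
  · rw [Matrix.mulVec_smul]
    have hXw : Xᵀ *ᵥ w = (Xᵀ * X) *ᵥ u := by rw [hwdef, Matrix.mulVec_mulVec]
    rw [hXw, heq, hmu, smul_smul]
    congr 1
    field_simp

/-- Davis-Kahan core inequality. -/
lemma key_lb (X : Matrix (Fin p) (Fin q) ℝ) (d1 : Fin q → ℝ) (d2 : Fin p → ℝ) {a b : ℝ}
    (h1 : ∀ j, a ≤ d1 j) (h2 : ∀ i, d2 i ≤ b) :
    (a - b) * spec X ≤ spec (X * Matrix.diagonal d1 - Matrix.diagonal d2 * X) := by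
  rcases (spec_nonneg X).eq_or_lt with h0 | hX
  · rw [← h0, mul_zero]
    exact spec_nonneg _
  · obtain ⟨u, v, huu, hvv, hXu, hXtv⟩ := exists_sing_pair X hX
    set σ := spec X with hσ
    set S := X * Matrix.diagonal d1 - Matrix.diagonal d2 * X with hSdef
    have hSu : S *ᵥ u = X *ᵥ (Matrix.diagonal d1 *ᵥ u) - Matrix.diagonal d2 *ᵥ (X *ᵥ u) := by
      rw [hSdef, Matrix.sub_mulVec, Matrix.mulVec_mulVec, Matrix.mulVec_mulVec]
    have hterm1 : σ * (a * 1) ≤ v ⬝ᵥ (X *ᵥ (Matrix.diagonal d1 *ᵥ u)) := by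
      rw [Matrix.dotProduct_mulVec, ← Matrix.mulVec_transpose, hXtv, smul_dotProduct]
      rw [smul_eq_mul]
      have := dot_diag_ge d1 u h1
      rw [huu] at this
      exact mul_le_mul_of_nonneg_left (by rw [mul_one] at this ⊢; exact this) (le_of_lt hX)
    have hterm2 : v ⬝ᵥ (Matrix.diagonal d2 *ᵥ (X *ᵥ u)) ≤ σ * (b * 1) := by
      rw [hXu, Matrix.mulVec_smul, dotProduct_smul, smul_eq_mul]
      have := dot_diag_le d2 v h2
      rw [hvv] at this
      exact mul_le_mul_of_nonneg_left (by rw [mul_one] at this ⊢; exact this) (le_of_lt hX)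
    have hE : σ * (a - b) ≤ v ⬝ᵥ (S *ᵥ u) := by
      rw [hSu, dotProduct_sub]
      have := sub_le_sub hterm1 hterm2
      calc σ * (a - b) = σ * (a * 1) - σ * (b * 1) := by ring
        _ ≤ _ := this
    have hEle : v ⬝ᵥ (S *ᵥ u) ≤ spec S := dot_mulVec_le_spec S u v huu hvv
    calc (a - b) * σ = σ * (a - b) := by ring
      _ ≤ v ⬝ᵥ (S *ᵥ u) := hE
      _ ≤ spec S := hEle

/-- data about the smallest eigenvalue of `BᵀB`. -/
lemma min_eig_data (B : Matrix (Fin m) (Fin m) ℝ) (hm : 0 < m) :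
    ∃ c : ℝ, 0 ≤ c ∧ (∀ y : Fin m → ℝ, c * (y ⬝ᵥ y) ≤ y ⬝ᵥ ((Bᵀ * B) *ᵥ y)) ∧
      (∃ u : Fin m → ℝ, u ⬝ᵥ u = 1 ∧ (Bᵀ * B) *ᵥ u = c • u) ∧
      (spec B ≤ 1 → spec (1 - Bᵀ * B) = 1 - c) := by
  have hsym : (Bᵀ * B)ᵀ = Bᵀ * B := by
    rw [Matrix.transpose_mul, Matrix.transpose_transpose]
  obtain ⟨U, μ, hU, hU2, hdec, heig, hnorm⟩ := sym_decomp hsym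
  have hne : Nonempty (Fin m) := ⟨⟨0, hm⟩⟩
  obtain ⟨i1, -, hi1⟩ := Finset.exists_min_image (Finset.univ : Finset (Fin m)) μ
    ⟨hne.some, Finset.mem_univ _⟩
  have hray : ∀ y : Fin m → ℝ, μ i1 * (y ⬝ᵥ y) ≤ y ⬝ᵥ ((Bᵀ * B) *ᵥ y) :=
    fun y => rayleigh_ge hU2 hdec (fun i => hi1 i (Finset.mem_univ i)) y
  have hμval : ∀ i, (fun l => U l i) ⬝ᵥ ((Bᵀ * B) *ᵥ (fun l => U l i)) = μ i := by
    intro i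
    rw [heig i, dotProduct_smul, hnorm i, smul_eq_mul, mul_one]
  have hμnonneg : ∀ i, 0 ≤ μ i := by
    intro i
    rw [← hμval i, ← dot_mulVec_mulVec]
    exact dot_self_nonneg _
  refine ⟨μ i1, hμnonneg i1, hray, ⟨fun l => U l i1, hnorm i1, heig i1⟩, fun hB => ?_⟩
  have hμle1 : ∀ i, μ i ≤ 1 := by
    intro i
    have h3 := mulVec_dot_le B (fun l => U l i)
    rw [dot_mulVec_mulVec, hμval i, hnorm i, mul_one] at h3
    have : spec B ^ 2 ≤ 1 := by nlinarith [spec_nonneg B]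
    linarith
  have hdec2 : 1 - Bᵀ * B = U * Matrix.diagonal (fun i => 1 - μ i) * Uᵀ := by
    have hdiag : Matrix.diagonal (fun i : Fin m => 1 - μ i)
        = 1 - Matrix.diagonal μ := by
      rw [← Matrix.diagonal_one, ← Matrix.diagonal_sub]
    rw [hdiag, Matrix.mul_sub, Matrix.mul_one, Matrix.sub_mul, hU2, ← hdec]
  apply le_antisymm
  · rw [hdec2, spec_conj U _ hU hU2]
    refine spec_diag_le (by linarith [hμle1 i1]) fun i => ?_
    rw [abs_of_nonneg (by linarith [hμle1 i])]
    have := hi1 i (Finset.mem_univ i)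
    linarith
  · -- lower bound via eigenvector
    set u : Fin m → ℝ := fun l => U l i1 with hudef
    have hvec : (1 - Bᵀ * B) *ᵥ u = (1 - μ i1) • u := by
      rw [Matrix.sub_mulVec, Matrix.one_mulVec, heig i1, sub_smul, one_smul]
    have h4 := mulVec_dot_le (1 - Bᵀ * B) u
    rw [hvec, hnorm i1, mul_one, smul_dotProduct, dotProduct_smul,
      hnorm i1, smul_eq_mul, smul_eq_mul, mul_one] at h4
    have h5 : (1 - μ i1) ^ 2 ≤ spec (1 - Bᵀ * B) ^ 2 := by nlinarith
    have h6 : 0 ≤ 1 - μ i1 := by linarith [hμle1 i1]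
    nlinarith [spec_nonneg (1 - Bᵀ * B)]

/-- smallest eigenvalue comparison between `BᵀB` and `BBᵀ`. -/
lemma min_swap_le (B : Matrix (Fin m) (Fin m) ℝ) {c1 c2 : ℝ} (hc1 : 0 ≤ c1)
    (hu : ∃ u : Fin m → ℝ, u ⬝ᵥ u = 1 ∧ (Bᵀ * B) *ᵥ u = c1 • u)
    (hray : ∀ y : Fin m → ℝ, c2 * (y ⬝ᵥ y) ≤ y ⬝ᵥ ((B * Bᵀ) *ᵥ y)) : c2 ≤ c1 := by
  obtain ⟨u, huu, heq⟩ := hu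
  set y := B *ᵥ u with hydef
  have hyy : y ⬝ᵥ y = c1 := by
    rw [hydef, dot_mulVec_mulVec, heq, dotProduct_smul, huu, smul_eq_mul, mul_one]
  rcases hc1.eq_or_lt with h0 | hpos
  · -- c1 = 0 : B is singular
    have hy0 : y = 0 := dot_self_eq_zero (by rw [hyy, ← h0])
    have hu0 : u ≠ 0 := by
      intro h
      rw [h] at huu
      simp [dotProduct] at huu
    have hdet : B.det = 0 := by
      rw [← Matrix.exists_mulVec_eq_zero_iff]
      exact ⟨u, hu0, by rw [← hydef, hy0]⟩
    have hdetT : Bᵀ.det = 0 := by rw [Matrix.det_transpose]; exact hdet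
    obtain ⟨v, hv0, hvz⟩ := Matrix.exists_mulVec_eq_zero_iff.mpr hdetT
    have h1 := hray v
    have h2 : (B * Bᵀ) *ᵥ v = 0 := by
      rw [← Matrix.mulVec_mulVec, hvz, Matrix.mulVec_zero]
    rw [h2, dotProduct_zero] at h1
    have h3 : 0 < v ⬝ᵥ v := by
      rcases (dot_self_nonneg v).eq_or_lt with h | h
      · exact absurd (dot_self_eq_zero h.symm) hv0
      · exact h
    have hc2 : c2 ≤ 0 := by nlinarith
    linarith
  · -- c1 > 0
    have heig2 : (B * Bᵀ) *ᵥ y = c1 • y := by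
      rw [hydef, Matrix.mulVec_mulVec, Matrix.mul_assoc, ← Matrix.mulVec_mulVec, heq,
        Matrix.mulVec_smul]
    have h1 := hray y
    rw [heig2, dotProduct_smul, hyy, smul_eq_mul] at h1
    have : c2 * c1 ≤ c1 * c1 := h1
    exact le_of_mul_le_mul_right (by linarith) hpos

lemma norm_one_sub_eq (hm : 0 < m) (B : Matrix (Fin m) (Fin m) ℝ) (hB : spec B ≤ 1) :
    spec (1 - Bᵀ * B) = spec (1 - B * Bᵀ) := by
  obtain ⟨c1, hc1, hray1, hu1, hs1⟩ := min_eig_data B hm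
  obtain ⟨c2, hc2, hray2, hu2, hs2⟩ := min_eig_data Bᵀ hm
  rw [Matrix.transpose_transpose] at hray2 hu2 hs2
  have hBT : spec Bᵀ ≤ 1 := by rw [spec_transpose]; exact hB
  have e1 : c2 ≤ c1 := min_swap_le B hc1 hu1 hray2
  have e2 : c1 ≤ c2 := min_swap_le Bᵀ hc2 (by rw [Matrix.transpose_transpose]; exact hu2)
    (by rw [Matrix.transpose_transpose]; exact hray1)
  rw [hs1 hB, hs2 hBT, le_antisymm e2 e1]


/-- Norm bound for difference of orthogonal projections. -/
lemma proj_diff_le {P Q : Matrix (Fin m) (Fin m) ℝ} (hPt : Pᵀ = P) (hP2 : P * P = P)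
    (hQt : Qᵀ = Q) (hQ2 : Q * Q = Q) {c : ℝ} (hc : 0 ≤ c)
    (h1 : spec ((1 - Q) * P) ≤ c) (h2 : spec ((1 - P) * Q) ≤ c) :
    spec (P - Q) ≤ c := by
  refine spec_le_bound hc fun x => ?_
  have hid : P - Q = (1 - Q) * P - Q * (1 - P) := by
    rw [Matrix.sub_mul, Matrix.mul_sub, Matrix.one_mul, Matrix.mul_one]
    abel
  have hsplit : (P - Q) *ᵥ x = ((1 - Q) * P) *ᵥ x - (Q * (1 - P)) *ᵥ x := by
    rw [hid, Matrix.sub_mulVec]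
  have hPP : (1 - P) * (1 - P) = 1 - P := by
    rw [Matrix.mul_sub, Matrix.mul_one, Matrix.sub_mul, Matrix.one_mul, hP2]
    abel
  set y1 := ((1 - Q) * P) *ᵥ x with hy1
  set y2 := (Q * (1 - P)) *ᵥ x with hy2
  have horth : y1 ⬝ᵥ y2 = 0 := by
    rw [hy1, hy2, dot_mulVec_mulVec]
    have hz : ((1 - Q) * P)ᵀ * (Q * (1 - P)) = 0 := by
      have hQQ : (1 - Q) * Q = 0 := by
        rw [Matrix.sub_mul, Matrix.one_mul, hQ2, sub_self]
      rw [Matrix.transpose_mul, Matrix.transpose_sub, Matrix.transpose_one, hPt, hQt]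
      calc P * (1 - Q) * (Q * (1 - P)) = P * ((1 - Q) * Q) * (1 - P) := by
            rw [Matrix.mul_assoc, Matrix.mul_assoc, Matrix.mul_assoc]
        _ = 0 := by rw [hQQ, Matrix.mul_zero, Matrix.zero_mul]
    rw [hz, Matrix.zero_mulVec, dotProduct_zero]
  have hexp : ((P - Q) *ᵥ x) ⬝ᵥ ((P - Q) *ᵥ x) = y1 ⬝ᵥ y1 + y2 ⬝ᵥ y2 := by
    rw [hsplit, sub_dotProduct, dotProduct_sub, dotProduct_sub,
      horth]
    have h21 : y2 ⬝ᵥ y1 = 0 := by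
      rw [dotProduct_comm]; exact horth
    rw [h21]
    ring
  -- bound y1
  have hb1 : y1 ⬝ᵥ y1 ≤ c ^ 2 * ((P *ᵥ x) ⬝ᵥ (P *ᵥ x)) := by
    have hfac : y1 = ((1 - Q) * P) *ᵥ (P *ᵥ x) := by
      rw [hy1, Matrix.mulVec_mulVec, Matrix.mul_assoc, hP2]
    rw [hfac]
    calc (((1 - Q) * P) *ᵥ (P *ᵥ x)) ⬝ᵥ (((1 - Q) * P) *ᵥ (P *ᵥ x))
        ≤ spec ((1 - Q) * P) ^ 2 * ((P *ᵥ x) ⬝ᵥ (P *ᵥ x)) := mulVec_dot_le _ _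
      _ ≤ c ^ 2 * ((P *ᵥ x) ⬝ᵥ (P *ᵥ x)) := by
          refine mul_le_mul_of_nonneg_right ?_ (dot_self_nonneg _)
          exact pow_le_pow_left₀ (spec_nonneg _) h1 2
  have hb2 : y2 ⬝ᵥ y2 ≤ c ^ 2 * (((1 - P) *ᵥ x) ⬝ᵥ ((1 - P) *ᵥ x)) := by
    have hfac : y2 = (Q * (1 - P)) *ᵥ ((1 - P) *ᵥ x) := by
      rw [hy2, Matrix.mulVec_mulVec, Matrix.mul_assoc, hPP]
    rw [hfac]
    have hspec : spec (Q * (1 - P)) ≤ c := by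
      have ht : (Q * (1 - P))ᵀ = (1 - P) * Q := by
        rw [Matrix.transpose_mul, Matrix.transpose_sub, Matrix.transpose_one, hPt, hQt]
      calc spec (Q * (1 - P)) = spec ((Q * (1 - P))ᵀ) := (spec_transpose _).symm
        _ = spec ((1 - P) * Q) := by rw [ht]
        _ ≤ c := h2
    calc ((Q * (1 - P)) *ᵥ ((1 - P) *ᵥ x)) ⬝ᵥ ((Q * (1 - P)) *ᵥ ((1 - P) *ᵥ x))
        ≤ spec (Q * (1 - P)) ^ 2 * (((1 - P) *ᵥ x) ⬝ᵥ ((1 - P) *ᵥ x)) := mulVec_dot_le _ _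
      _ ≤ c ^ 2 * (((1 - P) *ᵥ x) ⬝ᵥ ((1 - P) *ᵥ x)) := by
          refine mul_le_mul_of_nonneg_right ?_ (dot_self_nonneg _)
          exact pow_le_pow_left₀ (spec_nonneg _) hspec 2
  -- Pythagoras for x
  have hpyth : (P *ᵥ x) ⬝ᵥ (P *ᵥ x) + ((1 - P) *ᵥ x) ⬝ᵥ ((1 - P) *ᵥ x) = x ⬝ᵥ x := by
    rw [dot_mulVec_mulVec, dot_mulVec_mulVec, hPt, hP2]
    have ht : (1 - P)ᵀ * (1 - P) = 1 - P := by
      rw [Matrix.transpose_sub, Matrix.transpose_one, hPt, hPP]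
    rw [ht, ← dotProduct_add, ← Matrix.add_mulVec]
    have : P + (1 - P) = 1 := by abel
    rw [this, Matrix.one_mulVec]
  calc ((P - Q) *ᵥ x) ⬝ᵥ ((P - Q) *ᵥ x) = y1 ⬝ᵥ y1 + y2 ⬝ᵥ y2 := hexp
    _ ≤ c ^ 2 * ((P *ᵥ x) ⬝ᵥ (P *ᵥ x)) + c ^ 2 * (((1 - P) *ᵥ x) ⬝ᵥ ((1 - P) *ᵥ x)) :=
        add_le_add hb1 hb2
    _ = c ^ 2 * (x ⬝ᵥ x) := by rw [← mul_add, hpyth]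

/-- submatrix of columns: `M * N.submatrix id f = (M * N).submatrix id f`. -/
lemma mul_submatrix_cols (M : Matrix (Fin m) (Fin n) ℝ) (N : Matrix (Fin n) (Fin p) ℝ)
    (f : Fin q → Fin p) : M * N.submatrix id f = (M * N).submatrix id f := by
  ext i j
  simp [Matrix.mul_apply, Matrix.submatrix_apply]

/-- orthonormal columns of a submatrix. -/
lemma submatrix_orth {V : Matrix (Fin n) (Fin n) ℝ} (hV : Vᵀ * V = 1)
    {f : Fin q → Fin n} (hf : Function.Injective f) :
    (V.submatrix id f)ᵀ * V.submatrix id f = 1 := by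
  ext i j
  have h1 : ((V.submatrix id f)ᵀ * V.submatrix id f) i j = (Vᵀ * V) (f i) (f j) := by
    simp [Matrix.mul_apply, Matrix.submatrix_apply, Matrix.transpose_apply]
  rw [h1, hV]
  by_cases h : i = j
  · subst h; simp [Matrix.one_apply]
  · rw [Matrix.one_apply_ne (fun hc => h (hf hc)), Matrix.one_apply_ne h]

/-- eigen-relation restricted to selected columns. -/
lemma eig_cols {A V : Matrix (Fin n) (Fin n) ℝ} {lam : Fin n → ℝ}
    (hV : Vᵀ * V = 1) (hdec : A = V * Matrix.diagonal lam * Vᵀ) (f : Fin q → Fin n) :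
    A * V.submatrix id f = V.submatrix id f * Matrix.diagonal (lam ∘ f) := by
  have hAV : A * V = V * Matrix.diagonal lam := by
    rw [hdec, Matrix.mul_assoc, Matrix.mul_assoc]
    have : Vᵀ * V = 1 := hV
    rw [this, Matrix.mul_one]
  rw [mul_submatrix_cols, hAV]
  ext i j
  rw [Matrix.submatrix_apply, Matrix.mul_diagonal, Matrix.mul_diagonal,
    Matrix.submatrix_apply]
  rfl

lemma MP_unique {X : Matrix (Fin m) (Fin n) ℝ} {Y Z : Matrix (Fin n) (Fin m) ℝ}
    (hY : IsMP X Y) (hZ : IsMP X Z) : Y = Z := by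
  obtain ⟨hY1, hY2, hY3, hY4⟩ := hY
  obtain ⟨hZ1, hZ2, hZ3, hZ4⟩ := hZ
  have hXY : X * Y = X * Z := by
    calc X * Y = (X * Y)ᵀ := hY3.symm
      _ = (X * Z * X * Y)ᵀ := by rw [hZ1]
      _ = ((X * Z) * (X * Y))ᵀ := by congr 1; simp only [Matrix.mul_assoc]
      _ = (X * Y)ᵀ * (X * Z)ᵀ := by rw [Matrix.transpose_mul]
      _ = (X * Y) * (X * Z) := by rw [hY3, hZ3]
      _ = (X * Y * X) * Z := by simp only [Matrix.mul_assoc]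
      _ = X * Z := by rw [hY1]
  have hYX : Y * X = Z * X := by
    calc Y * X = (Y * X)ᵀ := hY4.symm
      _ = (Y * (X * Z * X))ᵀ := by rw [hZ1]
      _ = ((Y * X) * (Z * X))ᵀ := by congr 1; simp only [Matrix.mul_assoc]
      _ = (Z * X)ᵀ * (Y * X)ᵀ := by rw [Matrix.transpose_mul]
      _ = (Z * X) * (Y * X) := by rw [hY4, hZ4]
      _ = Z * (X * Y * X) := by simp only [Matrix.mul_assoc]
      _ = Z * X := by rw [hY1]
  calc Y = Y * X * Y := hY2.symm
    _ = Z * X * Y := by rw [hYX]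
    _ = Z * (X * Y) := by rw [Matrix.mul_assoc]
    _ = Z * (X * Z) := by rw [hXY]
    _ = Z * X * Z := by rw [← Matrix.mul_assoc]
    _ = Z := hZ2

lemma pinv_eq {X : Matrix (Fin m) (Fin n) ℝ} {Y : Matrix (Fin n) (Fin m) ℝ}
    (hY : IsMP X Y) : pinv X = Y := by
  have hex : ∃ Z, IsMP X Z := ⟨Y, hY⟩
  have : pinv X = hex.choose := by
    unfold pinv
    rw [dif_pos hex]
  rw [this]
  exact MP_unique hex.choose_spec hY

lemma projCol_orth {U : Matrix (Fin m) (Fin n) ℝ} (hU : Uᵀ * U = 1) :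
    projCol U = U * Uᵀ := by
  have hmp : IsMP U Uᵀ := by
    refine ⟨?_, ?_, ?_, ?_⟩
    · rw [Matrix.mul_assoc, hU, Matrix.mul_one]
    · rw [hU, Matrix.one_mul]
    · rw [Matrix.transpose_mul, Matrix.transpose_transpose]
    · rw [hU, Matrix.transpose_one]
  unfold projCol
  rw [pinv_eq hmp]

/-- column split: `V Vᵀ = V₁V₁ᵀ + V₂V₂ᵀ`. -/
lemma col_split (V : Matrix (Fin n) (Fin n) ℝ) (k : ℕ) (h : k ≤ n)
    (g : Fin (n - k) → Fin n) (hg : ∀ j, (g j).1 = k + j.1) :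
    V * Vᵀ = V.submatrix id (Fin.castLE h) * (V.submatrix id (Fin.castLE h))ᵀ
      + V.submatrix id g * (V.submatrix id g)ᵀ := by
  ext i j
  rw [Matrix.add_apply, Matrix.mul_apply, Matrix.mul_apply, Matrix.mul_apply]
  simp only [Matrix.transpose_apply, Matrix.submatrix_apply, id_eq]
  have hsplit : ∀ G : Fin n → ℝ, ∑ l : Fin n, G l
      = ∑ l : Fin k, G (Fin.castLE h l)
        + ∑ l : Fin (n - k), G (⟨k + l.1, by omega⟩ : Fin n) := by
    intro G
    have he : n = k + (n - k) := by omega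
    rw [← Fin.sum_congr' G he.symm]
    rw [Fin.sum_univ_add]
    rfl
  have hgl : ∀ l : Fin (n - k), V i (g l) * V j (g l)
      = V i (⟨k + l.1, by omega⟩ : Fin n) * V j (⟨k + l.1, by omega⟩ : Fin n) := by
    intro l
    have : g l = (⟨k + l.1, by omega⟩ : Fin n) := by
      apply Fin.ext
      rw [hg l]
    rw [this]
  rw [Finset.sum_congr rfl fun l _ => hgl l]
  exact hsplit fun l => V i l * V j l

end DK
end DKproofs

set_option maxHeartbeats 1000000
open DK

/-- Corollary of the Davis–Kahan sin Θ theorem.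
If `A, Ã` are symmetric `n×n` matrices of rank at least `k`, with eigenvalues listed in
nonincreasing order via orthogonal eigendecompositions, and `λ_k(A) > λ̃_{k+1}(Ã)`, then
`d₂(V_{A,k}, V_{Ã,k}) ≤ ‖A − Ã‖₂ / (λ_k − λ̃_{k+1})`. -/
theorem statement0
    (n k : ℕ) (hk0 : 0 < k) (hkn : k < n)
    (A At : Matrix (Fin n) (Fin n) ℝ)
    (hA : Aᵀ = A) (hAt : Atᵀ = At)
    (hrankA : k ≤ A.rank) (hrankAt : k ≤ At.rank)
    (VA VAt : Matrix (Fin n) (Fin n) ℝ) (lamA lamAt : Fin n → ℝ)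
    (hVA : VAᵀ * VA = 1) (hVAt : VAtᵀ * VAt = 1)
    (hlamA : Antitone lamA) (hlamAt : Antitone lamAt)
    (hdecA : A = VA * Matrix.diagonal lamA * VAᵀ)
    (hdecAt : At = VAt * Matrix.diagonal lamAt * VAtᵀ)
    (hgap : lamAt ⟨k, hkn⟩ < lamA ⟨k - 1, by omega⟩) :
    d2 (firstCols VA k hkn.le) (firstCols VAt k hkn.le)
      ≤ spec (A - At) / (lamA ⟨k - 1, by omega⟩ - lamAt ⟨k, hkn⟩) := by
  have hkn' : k ≤ n := hkn.le
  set a : ℝ := lamA ⟨k - 1, by omega⟩ with ha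
  set b : ℝ := lamAt ⟨k, hkn⟩ with hb
  set gt : Fin (n - k) → Fin n := fun j => ⟨k + j.1, by have := j.2; omega⟩ with hgt
  have hgval : ∀ j, (gt j).1 = k + j.1 := fun j => rfl
  have hginj : Function.Injective gt := by
    intro x y hxy
    apply Fin.ext
    have := congrArg Fin.val hxy
    simp only [hgval] at this
    omega
  have hcinj : Function.Injective (Fin.castLE hkn') := Fin.castLE_injective hkn'
  set V1 := VA.submatrix id (Fin.castLE hkn') with hV1def
  set W1 := VAt.submatrix id (Fin.castLE hkn') with hW1def
  set V2 := VA.submatrix id gt with hV2def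
  set W2 := VAt.submatrix id gt with hW2def
  have hV1 : V1ᵀ * V1 = 1 := submatrix_orth hVA hcinj
  have hW1 : W1ᵀ * W1 = 1 := submatrix_orth hVAt hcinj
  have hV2 : V2ᵀ * V2 = 1 := submatrix_orth hVA hginj
  have hW2 : W2ᵀ * W2 = 1 := submatrix_orth hVAt hginj
  -- the goal in terms of projections
  have hgoal : d2 (firstCols VA k hkn.le) (firstCols VAt k hkn.le)
      = spec (V1 * V1ᵀ - W1 * W1ᵀ) := by
    have h1 : firstCols VA k hkn.le = V1 := rfl
    have h2 : firstCols VAt k hkn.le = W1 := rfl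
    rw [show d2 (firstCols VA k hkn.le) (firstCols VAt k hkn.le)
      = spec (projCol (firstCols VA k hkn.le) - projCol (firstCols VAt k hkn.le)) from rfl,
      h1, h2, projCol_orth hV1, projCol_orth hW1]
  set P := V1 * V1ᵀ with hPdef
  set Q := W1 * W1ᵀ with hQdef
  have hPt : Pᵀ = P := by
    rw [hPdef, Matrix.transpose_mul, Matrix.transpose_transpose]
  have hQt : Qᵀ = Q := by
    rw [hQdef, Matrix.transpose_mul, Matrix.transpose_transpose]
  have hP2 : P * P = P := by
    rw [hPdef, Matrix.mul_assoc, ← Matrix.mul_assoc V1ᵀ V1 V1ᵀ, hV1, Matrix.one_mul]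
  have hQ2 : Q * Q = Q := by
    rw [hQdef, Matrix.mul_assoc, ← Matrix.mul_assoc W1ᵀ W1 W1ᵀ, hW1, Matrix.one_mul]
  -- identity splits
  have hVAone : VA * VAᵀ = 1 := mul_eq_one_comm.mp hVA
  have hVAtone : VAt * VAtᵀ = 1 := mul_eq_one_comm.mp hVAt
  have hsplitA : (1 : Matrix (Fin n) (Fin n) ℝ) = P + V2 * V2ᵀ := by
    rw [← hVAone]; exact col_split VA k hkn' gt hgval
  have hsplitAt : (1 : Matrix (Fin n) (Fin n) ℝ) = Q + W2 * W2ᵀ := by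
    rw [← hVAtone]; exact col_split VAt k hkn' gt hgval
  have h1mP : (1 : Matrix (Fin n) (Fin n) ℝ) - P = V2 * V2ᵀ := by
    rw [hsplitA]; abel
  have h1mQ : (1 : Matrix (Fin n) (Fin n) ℝ) - Q = W2 * W2ᵀ := by
    rw [hsplitAt]; abel
  -- blocks
  set B := W1ᵀ * V1 with hBdef
  set C := W2ᵀ * V1 with hCdef
  set F := W1ᵀ * V2 with hFdef
  have hspec1Q : spec ((1 - Q) * P) = spec C := by
    rw [h1mQ, hPdef]
    have : W2 * W2ᵀ * (V1 * V1ᵀ) = W2 * (C * V1ᵀ) := by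
      rw [hCdef]; simp only [Matrix.mul_assoc]
    rw [this, spec_orthL hW2, spec_orthR hV1]
  have hspec1P : spec ((1 - P) * Q) = spec F := by
    rw [h1mP, hQdef]
    have : V2 * V2ᵀ * (W1 * W1ᵀ) = V2 * ((V2ᵀ * W1) * W1ᵀ) := by
      simp only [Matrix.mul_assoc]
    rw [this, spec_orthL hV2, spec_orthR hW1]
    have h2 : V2ᵀ * W1 = Fᵀ := by
      rw [hFdef, Matrix.transpose_mul, Matrix.transpose_transpose]
    rw [h2, spec_transpose]
  -- block identities
  have hCC : Cᵀ * C = 1 - Bᵀ * B := by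
    have e1 : Bᵀ * B + Cᵀ * C = V1ᵀ * ((Q + W2 * W2ᵀ) * V1) := by
      rw [hBdef, hCdef, hQdef]
      simp only [Matrix.transpose_mul, Matrix.transpose_transpose, Matrix.add_mul,
        Matrix.mul_add, Matrix.mul_assoc]
    rw [← hsplitAt, Matrix.one_mul, hV1] at e1
    rw [← e1]; abel
  have hFF : F * Fᵀ = 1 - B * Bᵀ := by
    have e1 : B * Bᵀ + F * Fᵀ = W1ᵀ * ((P + V2 * V2ᵀ) * W1) := by
      rw [hBdef, hFdef, hPdef]
      simp only [Matrix.transpose_mul, Matrix.transpose_transpose, Matrix.add_mul,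
        Matrix.mul_add, Matrix.mul_assoc]
    rw [← hsplitA, Matrix.one_mul, hW1] at e1
    rw [← e1]; abel
  have hBle : spec B ≤ 1 := by
    have h1 := spec_mul_le W1ᵀ V1
    have h2 : spec W1ᵀ ≤ 1 := by rw [spec_transpose]; exact spec_le_one hW1
    have h3 : spec V1 ≤ 1 := spec_le_one hV1
    have h4 := spec_nonneg V1
    have h5 := spec_nonneg W1ᵀ
    nlinarith [spec_nonneg B]
  have hCF : spec C = spec F := by
    have e1 : spec C ^ 2 = spec F ^ 2 := by
      have c1 : spec C ^ 2 = spec ((1 : Matrix (Fin k) (Fin k) ℝ) - Bᵀ * B) := by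
        rw [← spec_transpose_mul_self C, hCC]
      have c2 : spec F ^ 2 = spec (F * Fᵀ) := by
        have h := spec_transpose_mul_self Fᵀ
        rw [Matrix.transpose_transpose, spec_transpose] at h
        exact h.symm
      rw [c1, c2, hFF]
      exact norm_one_sub_eq hk0 B hBle
    have := spec_nonneg C
    have := spec_nonneg F
    nlinarith
  -- Davis-Kahan core
  set Lam1 : Matrix (Fin k) (Fin k) ℝ := Matrix.diagonal (lamA ∘ Fin.castLE hkn') with hL1
  set Lam2 : Matrix (Fin (n - k)) (Fin (n - k)) ℝ := Matrix.diagonal (lamAt ∘ gt) with hL2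
  have hAV1 : A * V1 = V1 * Lam1 := eig_cols hVA hdecA (Fin.castLE hkn')
  have hAtW2 : At * W2 = W2 * Lam2 := eig_cols hVAt hdecAt gt
  have hS : C * Lam1 - Lam2 * C = W2ᵀ * ((A - At) * V1) := by
    have e1 : W2ᵀ * (A * V1) = C * Lam1 := by
      rw [hAV1, hCdef]; simp only [Matrix.mul_assoc]
    have e2 : W2ᵀ * (At * V1) = Lam2 * C := by
      have e3 : W2ᵀ * At = Lam2 * W2ᵀ := by
        have e4 := congrArg Matrix.transpose hAtW2
        rw [Matrix.transpose_mul, Matrix.transpose_mul, hAt, Matrix.diagonal_transpose] at e4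
        exact e4
      rw [← Matrix.mul_assoc, e3, hCdef, Matrix.mul_assoc]
    rw [Matrix.sub_mul, Matrix.mul_sub, e1, e2]
  have hSle : spec (W2ᵀ * ((A - At) * V1)) ≤ spec (A - At) := by
    have h1 := spec_mul_le W2ᵀ ((A - At) * V1)
    have h2 := spec_mul_le (A - At) V1
    have h3 : spec W2ᵀ ≤ 1 := by rw [spec_transpose]; exact spec_le_one hW2
    have h4 : spec V1 ≤ 1 := spec_le_one hV1
    nlinarith [spec_nonneg (A - At), spec_nonneg ((A - At) * V1), spec_nonneg W2ᵀ,
      spec_nonneg V1]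
  have hd1 : ∀ j : Fin k, a ≤ (lamA ∘ Fin.castLE hkn') j := by
    intro j
    apply hlamA
    have hj := j.2
    simp only [Fin.le_def, Fin.coe_castLE]
    omega
  have hd2 : ∀ i : Fin (n - k), (lamAt ∘ gt) i ≤ b := by
    intro i
    apply hlamAt
    simp only [Fin.le_def, hgval]
    omega
  have hkey : (a - b) * spec C ≤ spec (A - At) := by
    have h1 := key_lb C (lamA ∘ Fin.castLE hkn') (lamAt ∘ gt) hd1 hd2
    rw [← hL1, ← hL2] at h1
    rw [hS] at h1
    exact h1.trans hSle
  have hδ : 0 < a - b := sub_pos.mpr hgap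
  have hCle : spec C ≤ spec (A - At) / (a - b) := by
    rw [le_div_iff₀ hδ]
    calc spec C * (a - b) = (a - b) * spec C := by ring
      _ ≤ spec (A - At) := hkey
  have hPQ : spec (P - Q) ≤ spec C :=
    proj_diff_le hPt hP2 hQt hQ2 (spec_nonneg C) (le_of_eq hspec1Q)
      (by rw [hspec1P, ← hCF])
  rw [hgoal]
  exact le_trans hPQ hCle
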